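/- For each fixed s ∈ ℝ, φ_a(s) → +∞ as a → 0: for every R > 0 there exists a_R > 0 such that for all a with |a| ≤ a_R, the solution of -(p u')' + q u = a m u with u(s) = 0, u'(s) = 1/p(s) has no zero in (s, s+R], i.e. φ_a(s) ≥ s + R. -/

import Mathlib

open Set

/-- For fixed `s`, `φ_a(s) → +∞` as `a → 0`: for every `R > 0` there
exists `a_R > 0` such that for all `|a| ≤ a_R` the solution of
`-(p u')' + q u = a·m·u` with `u a s = 0`, `(u a)' s = 1/p s` has no zero in
`(s, s+R]`, i.e. `φ_a(s) ≥ s + R`. -/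
theorem zero_function_tendsto_infty_as_a_to_zero
    (p q m : ℝ → ℝ) (u u' : ℝ → ℝ → ℝ) (s p₁ m₂ : ℝ)
    (hp : Continuous p) (hq : Continuous q) (hm : Continuous m)
    (hp₁ : 0 < p₁) (hpl : ∀ t, p₁ ≤ p t)
    (hqnn : ∀ t, 0 ≤ q t) (hmb : ∀ t, m t ≤ m₂)
    (hsol : ∀ a, u a s = 0 ∧ u' a s = 1 / p s ∧
      ∀ t, HasDerivAt (u a) (u' a t) t ∧
        HasDerivAt (fun τ => p τ * u' a τ) (q t * u a t - a * m t * u a t) t) :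
    ∀ R > 0, ∃ aR > 0, ∀ a : ℝ, |a| ≤ aR → ∀ t ∈ Ioc s (s + R), u a t ≠ 0 := by
  intro R hR
  have hsmem : s ∈ Icc s (s + R) := ⟨le_refl s, by linarith⟩
  obtain ⟨Cq, hCq⟩ := IsCompact.exists_bound_of_continuousOn isCompact_Icc
    (hq.continuousOn : ContinuousOn q (Icc s (s + R)))
  obtain ⟨Cm, hCm⟩ := IsCompact.exists_bound_of_continuousOn isCompact_Icc
    (hm.continuousOn : ContinuousOn m (Icc s (s + R)))
  have hCq0 : 0 ≤ Cq := le_trans (norm_nonneg _) (hCq s hsmem)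
  have hCm0 : 0 ≤ Cm := le_trans (norm_nonneg _) (hCm s hsmem)
  set K : ℝ := 1 / p₁ + Cq + Cm with hKdef
  have hK0 : 0 ≤ K := by positivity
  set B : ℝ := Real.exp (K * R) with hBdef
  have hB0 : 0 < B := Real.exp_pos _
  refine ⟨min 1 (1 / (2 * R * (B + 1) * (Cm + 1))), by positivity, ?_⟩
  intro a ha t ht hut
  have ha1 : |a| ≤ 1 := ha.trans (min_le_left _ _)
  have ha2 : |a| ≤ 1 / (2 * R * (B + 1) * (Cm + 1)) := ha.trans (min_le_right _ _)
  obtain ⟨hus, hu's, hder⟩ := hsol a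
  have hps : 0 < p s := lt_of_lt_of_le hp₁ (hpl s)
  set w : ℝ → ℝ := fun τ => p τ * u' a τ with hwdef
  have hws : w s = 1 := by
    simp only [hwdef, hu's]
    field_simp
  have hcont : Continuous (u a) := by
    rw [continuous_iff_continuousAt]; exact fun x => (hder x).1.continuousAt
  have hcontw : Continuous w := by
    rw [continuous_iff_continuousAt]; exact fun x => (hder x).2.continuousAt
  -- Gronwall bound
  have gron : ∀ x ∈ Icc s (s + R), |u a x| ≤ B ∧ |w x| ≤ B := by
    have H := norm_le_gronwallBound_of_norm_deriv_right_le
      (f := fun τ => (u a τ, w τ))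
      (f' := fun τ => (u' a τ, q τ * u a τ - a * m τ * u a τ))
      (δ := 1) (K := K) (ε := 0) (a := s) (b := s + R)
      ((hcont.prodMk hcontw).continuousOn)
      (fun x _ => (((hder x).1.prodMk (hder x).2)).hasDerivWithinAt)
      (by simp [hus, hws, Prod.norm_def]) ?_
    · intro x hx
      have := H x hx
      rw [gronwallBound_ε0, one_mul] at this
      have hexp : Real.exp (K * (x - s)) ≤ B := by
        rw [hBdef]
        exact Real.exp_le_exp.2 (by nlinarith [hx.1, hx.2])
      have hn : ‖(u a x, w x)‖ ≤ B := this.trans hexp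
      rw [Prod.norm_def] at hn
      simp only [Real.norm_eq_abs] at hn
      exact ⟨(le_max_left _ _).trans hn, (le_max_right _ _).trans hn⟩
    · intro x hx
      have hxI : x ∈ Icc s (s + R) := ⟨hx.1, hx.2.le⟩
      rw [Prod.norm_def, Prod.norm_def]
      simp only [Real.norm_eq_abs]
      have hpx : 0 < p x := lt_of_lt_of_le hp₁ (hpl x)
      have h1 : |u' a x| ≤ (1 / p₁) * max |u a x| |w x| := by
        have : u' a x = w x / p x := by field_simp [hwdef]; simp only [hwdef]; ring
        rw [this, abs_div, abs_of_pos hpx]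
        calc |w x| / p x ≤ |w x| / p₁ :=
              div_le_div_of_nonneg_left (abs_nonneg _) hp₁ (hpl x)
          _ = (1 / p₁) * |w x| := by ring
          _ ≤ (1 / p₁) * max |u a x| |w x| :=
              mul_le_mul_of_nonneg_left (le_max_right _ _) (by positivity)
      have h2 : |q x * u a x - a * m x * u a x| ≤ (Cq + Cm) * max |u a x| |w x| := by
        calc |q x * u a x - a * m x * u a x|
            ≤ |q x * u a x| + |a * m x * u a x| := abs_sub _ _
          _ = |q x| * |u a x| + |a| * |m x| * |u a x| := by rw [abs_mul, abs_mul, abs_mul]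
          _ ≤ Cq * |u a x| + 1 * Cm * |u a x| := by
              gcongr
              · exact hCq x hxI
              · exact hCm x hxI
          _ = (Cq + Cm) * |u a x| := by ring
          _ ≤ (Cq + Cm) * max |u a x| |w x| := by
              gcongr; exact le_max_left _ _
      have hM : (0:ℝ) ≤ max |u a x| |w x| := le_trans (abs_nonneg _) (le_max_left _ _)
      have hip : (0:ℝ) ≤ 1 / p₁ := by positivity
      rw [hKdef, add_zero]
      apply max_le
      · exact h1.trans (by nlinarith [mul_nonneg (add_nonneg hCq0 hCm0) hM])
      · exact h2.trans (by nlinarith [mul_nonneg hip hM])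
  -- positivity just after s
  have hslope : Filter.Tendsto (slope (u a) s) (nhdsWithin s {s}ᶜ) (nhds (u' a s)) :=
    hasDerivAt_iff_tendsto_slope.1 (hder s).1
  have hu's_pos : 0 < u' a s := by rw [hu's]; positivity
  have hev : ∀ᶠ x in nhdsWithin s (Ioi s), 0 < u a x := by
    have h1 : ∀ᶠ x in nhdsWithin s {s}ᶜ, 0 < slope (u a) s x :=
      hslope.eventually (eventually_gt_nhds hu's_pos)
    have h2 : ∀ᶠ x in nhdsWithin s (Ioi s), 0 < slope (u a) s x :=
      h1.filter_mono (nhdsWithin_mono s (fun x hx => ne_of_gt hx))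
    filter_upwards [h2, self_mem_nhdsWithin] with x hx hx'
    rw [slope_def_field, hus, sub_zero, div_pos_iff] at hx
    rcases hx with ⟨h, _⟩ | ⟨_, h⟩
    · exact h
    · exfalso; rw [mem_Ioi] at hx'; linarith
  obtain ⟨b, hb, hIoc⟩ := mem_nhdsGT_iff_exists_Ioc_subset.1 hev
  rw [mem_Ioi] at hb
  have hbt : b < t := by
    by_contra hc
    push_neg at hc
    exact absurd hut (ne_of_gt (hIoc ⟨ht.1, hc⟩))
  -- first zero t₀
  set S : Set ℝ := Icc b (s + R) ∩ (u a) ⁻¹' {0} with hSdef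
  have hScl : IsClosed S := isClosed_Icc.inter (isClosed_singleton.preimage hcont)
  have htS : t ∈ S := ⟨⟨hbt.le, ht.2⟩, hut⟩
  have hSbdd : BddBelow S := ⟨b, fun x hx => hx.1.1⟩
  set t₀ : ℝ := sInf S with ht₀def
  have ht₀S : t₀ ∈ S := hScl.csInf_mem ⟨t, htS⟩ hSbdd
  have hbt₀ : b ≤ t₀ := ht₀S.1.1
  have hst₀ : s < t₀ := lt_of_lt_of_le hb hbt₀
  have ht₀R : t₀ ≤ s + R := ht₀S.1.2
  have hut₀ : u a t₀ = 0 := ht₀S.2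
  -- u > 0 on Ioo s t₀
  have hpos : ∀ τ ∈ Ioo s t₀, 0 < u a τ := by
    intro τ hτ
    rcases le_or_gt τ b with hcase | hcase
    · exact hIoc ⟨hτ.1, hcase⟩
    · by_contra hc
      push_neg at hc
      have hub : 0 < u a b := hIoc ⟨hb, le_refl b⟩
      have : (0:ℝ) ∈ Icc (u a τ) (u a b) := ⟨hc, hub.le⟩
      obtain ⟨z, hz, hz0⟩ := intermediate_value_Icc' hcase.le hcont.continuousOn this
      have hzS : z ∈ S := ⟨⟨hz.1, le_trans hz.2 (le_trans hτ.2.le ht₀R)⟩, hz0⟩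
      have := csInf_le hSbdd hzS
      have : t₀ ≤ τ := le_trans this hz.2
      exact absurd hτ.2 (not_lt.2 this)
  have hnn : ∀ τ ∈ Icc s t₀, 0 ≤ u a τ := by
    intro τ hτ
    rcases eq_or_lt_of_le hτ.1 with h | h
    · rw [← h, hus]
    rcases eq_or_lt_of_le hτ.2 with h2 | h2
    · rw [h2, hut₀]
    · exact (hpos τ ⟨h, h2⟩).le
  -- lower bound on w via monotone g
  have hsub : Icc s t₀ ⊆ Icc s (s + R) := Icc_subset_Icc (le_refl s) ht₀R
  have habs : ∀ x ∈ Icc s (s + R), |a * m x * u a x| ≤ 1 / (2 * R) := by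
    intro x hx
    have h1 : |a * m x * u a x| ≤ |a| * Cm * B := by
      rw [abs_mul, abs_mul]
      have hm1 : |m x| ≤ Cm := hCm x hx
      have hu1 : |u a x| ≤ B := (gron x hx).1
      have : |a| * |m x| ≤ |a| * Cm := mul_le_mul_of_nonneg_left hm1 (abs_nonneg a)
      exact mul_le_mul this hu1 (abs_nonneg _) (by positivity)
    refine h1.trans ?_
    have h2 : |a| * Cm * B ≤ (1 / (2 * R * (B + 1) * (Cm + 1))) * Cm * B := by
      gcongr
    refine h2.trans ?_
    rw [div_mul_eq_mul_div, div_mul_eq_mul_div, div_le_div_iff₀ (by positivity) (by positivity)]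
    nlinarith
  set g : ℝ → ℝ := fun τ => w τ + (1 / (2 * R)) * (τ - s) with hgdef
  have hgmono : MonotoneOn g (Icc s t₀) := by
    apply monotoneOn_of_deriv_nonneg (convex_Icc s t₀)
    · exact (hcontw.add (continuous_const.mul (continuous_id.sub continuous_const))).continuousOn
    · intro x hx
      exact ((hder x).2.add ((hasDerivAt_id x).sub_const s |>.const_mul (1 / (2 * R)))).differentiableAt.differentiableWithinAt
    · intro x hx
      rw [interior_Icc] at hx
      have hd : HasDerivAt g (q x * u a x - a * m x * u a x + (1 / (2 * R)) * 1) x :=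
        (hder x).2.add (((hasDerivAt_id x).sub_const s).const_mul (1 / (2 * R)))
      rw [hd.deriv]
      have hxI : x ∈ Icc s (s + R) := hsub ⟨hx.1.le, hx.2.le⟩
      have h1 : 0 ≤ q x * u a x := mul_nonneg (hqnn x) (hnn x ⟨hx.1.le, hx.2.le⟩)
      have h2 : |a * m x * u a x| ≤ 1 / (2 * R) := habs x hxI
      have := abs_le.1 h2
      nlinarith
  have hwlb : ∀ τ ∈ Icc s t₀, (1:ℝ)/2 ≤ w τ := by
    intro τ hτ
    have := hgmono (left_mem_Icc.2 (le_of_lt hst₀)) hτ hτ.1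
    simp only [hgdef, hws, sub_self, mul_zero, add_zero] at this
    have hτs : τ - s ≤ R := by
      have := hτ.2
      linarith
    have hub : (1 / (2 * R)) * (τ - s) ≤ 1/2 := by
      rw [div_mul_eq_mul_div, one_mul, div_le_div_iff₀ (by positivity) (by norm_num)]
      linarith
    linarith
  -- u strictly increasing on [s, t₀]
  have humono : StrictMonoOn (u a) (Icc s t₀) := by
    apply strictMonoOn_of_deriv_pos (convex_Icc s t₀) hcont.continuousOn
    intro x hx
    rw [interior_Icc] at hx
    rw [(hder x).1.deriv]
    have hpx : 0 < p x := lt_of_lt_of_le hp₁ (hpl x)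
    have hwx : 0 < w x := lt_of_lt_of_le (by norm_num) (hwlb x ⟨hx.1.le, hx.2.le⟩)
    have : u' a x = w x / p x := by field_simp [hwdef]; simp only [hwdef]; ring
    rw [this]
    exact div_pos hwx hpx
  have := humono (left_mem_Icc.2 hst₀.le) (right_mem_Icc.2 hst₀.le) hst₀
  rw [hus, hut₀] at this
  exact lt_irrefl 0 this
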